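/- arXiv:2407.18683 — 2 statements merged into one kernel-verified Lean document; each statement's English description precedes it below -/
import Mathlib

section
/- Removing a cycle from a walk does not increase its regularized cost: if a walk ω from s to d contains a repeated vertex, then the walk ω' obtained by deleting the cycle between the two occurrences satisfies c_λ(ω') ≤ c_λ(ω) for every λ ≥ 0, with strict inequality if λ > 0 and the deleted cycle is nonempty. -/
def IsWalk {V : Type*} (A : V → V → Prop) (s d : V) (p : List V) : Prop :=
  List.Chain' A p ∧ p.head? = some s ∧ p.getLast? = some d

noncomputable def bottleneck {V : Type*} (w : V → V → ℝ) (p : List V) : ℝ :=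
  ((p.zip p.tail).map (fun q => w q.1 q.2)).foldr max 0

def hops {V : Type*} (p : List V) : ℕ := p.length - 1

noncomputable def rcost {V : Type*} (w : V → V → ℝ) (lam : ℝ) (p : List V) : ℝ :=
  bottleneck w p + lam * (hops p : ℝ)

private lemma edges_split {V : Type*} (l : List V) (y : V) (r : List V) :
    (l ++ y :: r).zip (l ++ y :: r).tail
      = (l ++ [y]).zip (l ++ [y]).tail ++ (y :: r).zip r := by
  induction l with
  | nil => simp
  | cons x t ih =>
    cases t with
    | nil => simp
    | cons x' t' => simpa using ih

private lemma foldr_max_le {l₁ l₂ : List ℝ} (h : List.Sublist l₁ l₂) :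
    l₁.foldr max 0 ≤ l₂.foldr max 0 := by
  induction h with
  | slnil => simp
  | cons a _ ih => exact ih.trans (le_max_right _ _)
  | cons_cons a _ ih => exact max_le_max le_rfl ih

theorem stmt8 {V : Type*} (A : V → V → Prop) (w : V → V → ℝ)
    (hw : ∀ u v, 0 ≤ w u v) (s d v : V) (a b c : List V)
    (hwalk : IsWalk A s d (a ++ v :: b ++ v :: c)) :
    IsWalk A s d (a ++ v :: c) ∧
    (∀ lam : ℝ, 0 ≤ lam →
      rcost w lam (a ++ v :: c) ≤ rcost w lam (a ++ v :: b ++ v :: c)) ∧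
    (∀ lam : ℝ, 0 < lam →
      rcost w lam (a ++ v :: c) < rcost w lam (a ++ v :: b ++ v :: c)) := by
  obtain ⟨hch, hhd, hlast⟩ := hwalk
  have hre : a ++ v :: b ++ v :: c = a ++ (v :: b ++ v :: c) := by simp
  rw [hre] at hch
  rw [List.Chain', List.isChain_append] at hch
  obtain ⟨hca, hcr, hrel⟩ := hch
  have hcvc : List.Chain' A (v :: c) := hcr.suffix ⟨v :: b, by simp⟩
  have hwalk' : IsWalk A s d (a ++ v :: c) := by
    refine ⟨List.isChain_append.2 ⟨hca, hcvc, ?_⟩, ?_, ?_⟩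
    · intro x hx y hy
      apply hrel x hx
      simpa using hy
    · cases a with
      | nil => simpa using hhd
      | cons x t => simpa using hhd
    · have key : ∀ (l m : List V) (x : V), (l ++ x :: m).getLast? = (x :: m).getLast? := by
        intro l m x
        rw [List.getLast?_append, Option.or_of_isSome (by simp [List.getLast?_isSome])]
      rw [key]
      rw [show a ++ v :: b ++ v :: c = (a ++ v :: b) ++ v :: c from by simp, key] at hlast
      exact hlast
  -- bottleneck inequality
  have hbot : bottleneck w (a ++ v :: c) ≤ bottleneck w (a ++ v :: b ++ v :: c) := by
    unfold bottleneck
    apply foldr_max_le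
    apply List.Sublist.map
    rw [show a ++ v :: b ++ v :: c = a ++ v :: (b ++ v :: c) from by simp,
      edges_split a v c, edges_split a v (b ++ v :: c)]
    have h2 : (v :: b ++ v :: c).zip (b ++ v :: c)
        = (v :: b ++ [v]).zip (v :: b ++ [v]).tail ++ (v :: c).zip c := by
      have := edges_split (v :: b) v c
      simpa using this
    rw [show (v :: (b ++ v :: c)).zip (b ++ v :: c)
        = (v :: b ++ [v]).zip (v :: b ++ [v]).tail ++ (v :: c).zip c from by simpa using h2]
    exact ((List.sublist_append_right _ _).append_left _)
  have hhops : hops (a ++ v :: c) < hops (a ++ v :: b ++ v :: c) := by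
    simp [hops, List.length_append]
    omega
  refine ⟨hwalk', ?_, ?_⟩
  · intro lam hlam
    unfold rcost
    have := mul_le_mul_of_nonneg_left (Nat.cast_le.2 hhops.le : (hops (a ++ v :: c) : ℝ) ≤ _) hlam
    linarith
  · intro lam hlam
    unfold rcost
    have := mul_lt_mul_of_pos_left (Nat.cast_lt.2 hhops : (hops (a ++ v :: c) : ℝ) < _) hlam
    linarith
end

section
/- Prefix optimality can fail for the regularized bottleneck cost: there exists a weighted directed graph, λ > 0, and an optimal s–d path π* minimizing c_λ(π) = m(π) + λℓ(π) such that some prefix of π* from s to an intermediate vertex u is not an optimal s–u path under c_λ. Equivalently, exhibit a graph with vertices s, u, d, edge weights, and λ > 0 where the unique c_λ-optimal s–d path passes through u via a non-c_λ-optimal s–u subpath. -/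
def Aex : Fin 4 → Fin 4 → Prop := fun x y =>
  (x = 0 ∧ y = 1) ∨ (x = 0 ∧ y = 2) ∨ (x = 1 ∧ y = 2) ∨ (x = 2 ∧ y = 3)

noncomputable def wex : Fin 4 → Fin 4 → ℝ := fun x y =>
  if x = 0 ∧ y = 2 then 2 else if x = 2 ∧ y = 3 then 3 else 0

lemma le_foldr_max (x : ℝ) (l : List ℝ) (hx : x ∈ l) : x ≤ l.foldr max 0 := by
  induction l with
  | nil => simp at hx
  | cons a t ih =>
    rcases List.mem_cons.1 hx with h | h
    · subst h; exact le_max_left _ _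
    · exact le_trans (ih h) (le_max_right _ _)

lemma last_edge {V : Type*} {A : V → V → Prop} {d : V} :
    ∀ p : List V, 2 ≤ p.length → List.Chain' A p → p.getLast? = some d →
      ∃ y, A y d ∧ (y, d) ∈ p.zip p.tail := by
  intro p
  induction p with
  | nil => simp
  | cons a t ih =>
    intro hlen hch hlast
    match t, hch with
    | [], _ => simp at hlen
    | b :: t', hch =>
      rcases List.isChain_cons_cons.1 hch with ⟨hab, hch'⟩
      by_cases ht' : t' = []
      · subst ht'
        have hbd : b = d := by simpa using hlast
        subst hbd
        exact ⟨a, hab, by simp⟩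
      · have hlen2 : 2 ≤ (b :: t').length := by
          cases t' with
          | nil => exact absurd rfl ht'
          | cons c t'' => simp
        have hlast2 : (b :: t').getLast? = some d := by
          rw [List.getLast?_cons_cons] at hlast; exact hlast
        obtain ⟨y, hy, hmem⟩ := ih hlen2 hch' hlast2
        exact ⟨y, hy, by simp [List.zip]; right; simpa [List.zip] using hmem⟩

theorem stmt10 :
    ∃ (V : Type) (_ : Fintype V) (A : V → V → Prop) (w : V → V → ℝ)
      (lam : ℝ) (s u d : V) (πstar : List V),
      0 < lam ∧ (∀ x y : V, 0 ≤ w x y) ∧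
      IsWalk A s d πstar ∧
      (∀ q : List V, IsWalk A s d q → rcost w lam πstar ≤ rcost w lam q) ∧
      ∃ pre : List V, pre <+: πstar ∧ pre.getLast? = some u ∧
        ∃ q : List V, IsWalk A s u q ∧ rcost w lam q < rcost w lam pre := by
  refine ⟨Fin 4, inferInstance, Aex, wex, 1, 0, 2, 3, [0, 2, 3], one_pos, ?_, ?_, ?_, ?_⟩
  · intro x y
    unfold wex
    split <;> [norm_num; skip]
    split <;> norm_num
  · refine ⟨?_, rfl, rfl⟩
    simp [List.Chain', Aex]
  · -- optimality
    intro q ⟨hch, hhead, hlast⟩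
    have hstar : rcost wex 1 [0, 2, 3] = 5 := by
      simp [rcost, bottleneck, hops, wex]
      norm_num
    rw [hstar]
    -- q has length ≥ 3
    match q, hhead with
    | a :: t, hhead =>
      simp only [List.head?_cons, Option.some.injEq] at hhead
      subst hhead
      match t, hch, hlast with
      | [], _, hlast => simp at hlast
      | [b], hch, hlast =>
        simp only [List.getLast?_cons_cons, List.getLast?_singleton, Option.some.injEq] at hlast
        subst hlast
        rcases List.isChain_cons_cons.1 hch with ⟨hab, -⟩
        exact absurd hab (by unfold Aex; decide)
      | b :: c :: t', hch, hlast =>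
        set q := (0 : Fin 4) :: b :: c :: t' with hq
        have hlen : 2 ≤ q.length := by simp [hq]
        obtain ⟨y, hy, hmem⟩ := last_edge q hlen hch hlast
        have hy2 : y = 2 := by
          rcases hy with ⟨_, h⟩ | ⟨_, h⟩ | ⟨_, h⟩ | ⟨h, _⟩ <;>
            first | exact absurd h (by decide) | exact h
        subst hy2
        have hb : (3 : ℝ) ≤ bottleneck wex q := by
          apply le_foldr_max
          refine List.mem_map.2 ⟨((2 : Fin 4), (3 : Fin 4)), hmem, ?_⟩
          simp [wex]
        have hh : (2 : ℝ) ≤ (hops q : ℝ) := by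
          have : 2 ≤ hops q := by simp [hops, hq]
          exact_mod_cast this
        have : rcost wex 1 q = bottleneck wex q + (hops q : ℝ) := by
          simp [rcost]
        rw [this]; linarith
  · refine ⟨[0, 2], ⟨[3], rfl⟩, rfl, [0, 1, 2], ⟨?_, rfl, rfl⟩, ?_⟩
    · simp [List.Chain', Aex]
    · norm_num [rcost, bottleneck, hops, wex, (by decide : (1 : Fin 4) ≠ 2), (by decide : (0 : Fin 4) ≠ 2), (by decide : (2 : Fin 4) ≠ 3)]
end
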